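/- For every natural number n, Q_n(t,q) equals the sum, over all Motzkin paths of length n, of the path weight determined by b_h = t·q^h·([h]_q + [h+1]_q) and λ_h = (1 + t^2·q^{2h−1})·[h]_q^2; and R_n(t,q) equals the corresponding sum with b_h = t·q^h·(1+q)·[h+1]_q and λ_h = (1 + t^2·q^{2h})·[h]_q·[h+1]_q. (These Motzkin-path sums are equivalent to the Jacobi continued fraction expansions ∑_n Q_n(t,q) z^n = 𝔍(b_h^Q, λ_h^Q) and ∑_n R_n(t,q) z^n = 𝔍(b_h^R, λ_h^R).) -/

import Mathlib

open Polynomial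

/-- The q-integer `[m]_q = 1 + q + ⋯ + q^{m-1}` as a polynomial in `q` over `ℤ`. -/
noncomputable def qnat (m : ℕ) : Polynomial ℤ := ∑ i ∈ Finset.range m, X ^ i

/-- The q-derivative on `ℤ[q][t]` (outer variable `t`, coefficients in `ℤ[q]`):
`D(t^m) = [m]_q · t^{m-1}`. -/
noncomputable def qD (p : Polynomial (Polynomial ℤ)) : Polynomial (Polynomial ℤ) :=
  p.sum fun m c => C (c * qnat m) * X ^ (m - 1)

/-- The operator `U`: multiplication by `t`. -/
noncomputable def opU (p : Polynomial (Polynomial ℤ)) : Polynomial (Polynomial ℤ) := X * p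

/-- The q-analog `Q_n(t,q)`:
`Q_0 = 1`, `Q_{n+1} = (1+q·t²)·D(Q_n) + t·Q_n`. -/
noncomputable def qPolyQ : ℕ → Polynomial (Polynomial ℤ)
  | 0 => 1
  | n + 1 => (1 + C (X : Polynomial ℤ) * X ^ 2) * qD (qPolyQ n) + X * qPolyQ n

/-- The q-analog `R_n(t,q)`:
`R_0 = 1`, `R_{n+1} = (1+q²·t²)·D(R_n) + (1+q)·t·R_n`. -/
noncomputable def qPolyR : ℕ → Polynomial (Polynomial ℤ)
  | 0 => 1
  | n + 1 => (1 + C ((X : Polynomial ℤ) ^ 2) * X ^ 2) * qD (qPolyR n)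
      + (1 + C (X : Polynomial ℤ)) * X * qPolyR n
/-- A step of a Motzkin path. -/
inductive MStep : Type
  | up : MStep
  | level : MStep
  | down : MStep
  deriving DecidableEq

instance : Fintype MStep :=
  ⟨{MStep.up, MStep.level, MStep.down}, fun x => by cases x <;> simp⟩

/-- Whether a word of Motzkin steps, started at height `h`, stays nonnegative
(never steps down from height 0) and ends at height 0. -/
def isMotzkinFrom : List MStep → ℕ → Bool
  | [], h => h == 0
  | MStep.up :: rest, h => isMotzkinFrom rest (h + 1)
  | MStep.level :: rest, h => isMotzkinFrom rest h
  | MStep.down :: rest, h => h != 0 && isMotzkinFrom rest (h - 1)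

/-- The weight of a Motzkin path started at height `h`: each up step has weight `1`,
each level step at height `h` has weight `b h`, and each down step from height `h`
to `h-1` has weight `lam h`. -/
def mweight {R : Type*} [CommRing R] (b : ℕ → R) (lam : ℕ → R) : List MStep → ℕ → R
  | [], _ => 1
  | MStep.up :: rest, h => mweight b lam rest (h + 1)
  | MStep.level :: rest, h => b h * mweight b lam rest h
  | MStep.down :: rest, h => lam h * mweight b lam rest (h - 1)

lemma qnat_zero : qnat 0 = 0 := by simp [qnat]
lemma qnat_one : qnat 1 = 1 := by simp [qnat]
lemma qnat_succ (m : ℕ) : qnat (m + 1) = qnat m + X ^ m := by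
  simp [qnat, Finset.sum_range_succ]
lemma qnat_succ' (m : ℕ) : qnat (m + 1) = X * qnat m + 1 := by
  simp [qnat, Finset.sum_range_succ', Finset.mul_sum, pow_succ, mul_comm]

lemma qD_monomial (m : ℕ) (c : Polynomial ℤ) :
    qD (monomial m c) = C (c * qnat m) * X ^ (m - 1) := by
  apply sum_monomial_index
  simp

lemma qD_add (p r : Polynomial (Polynomial ℤ)) : qD (p + r) = qD p + qD r := by
  apply sum_add_index <;> intros <;> simp [add_mul]

lemma qD_zero : qD 0 = 0 := sum_zero_index _

lemma qD_one : qD 1 = 0 := by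
  rw [← Polynomial.C_1, ← monomial_zero_left, qD_monomial]
  simp [qnat_zero]

lemma qD_C_mul (a : Polynomial ℤ) (p : Polynomial (Polynomial ℤ)) :
    qD (C a * p) = C a * qD p := by
  induction p using Polynomial.induction_on' with
  | add p r hp hr => rw [mul_add, qD_add, hp, hr, qD_add, mul_add]
  | monomial m c =>
    rw [C_mul_monomial, qD_monomial, qD_monomial]
    simp only [C_mul]; ring

lemma qD_X_mul (p : Polynomial (Polynomial ℤ)) :
    qD (X * p) = C X * (X * qD p) + p := by
  induction p using Polynomial.induction_on' with
  | add p r hp hr =>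
    rw [mul_add, qD_add, hp, hr, qD_add]; ring
  | monomial m c =>
    rw [X_mul_monomial, qD_monomial, qD_monomial]
    cases m with
    | zero => simp [qnat_zero, qnat_one]
    | succ k =>
      simp only [Nat.add_sub_cancel, qnat_succ' (k+1)]
      rw [← C_mul_X_pow_eq_monomial]
      simp only [C_mul, C_add, C_1]
      ring

lemma qD_X2_mul (p : Polynomial (Polynomial ℤ)) :
    qD (X ^ 2 * p) = C ((X : Polynomial ℤ) ^ 2) * (X ^ 2 * qD p)
      + (1 + C (X : Polynomial ℤ)) * (X * p) := by
  have h : X ^ 2 * p = X * (X * p) := by ring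
  rw [h, qD_X_mul, qD_X_mul]
  simp only [C_pow]; ring

/-- `m_k = q^k ([k] + [k+1])` for the `Q` family. -/
noncomputable def mQ (k : ℕ) : Polynomial ℤ := X ^ k * (qnat k + qnat (k + 1))
/-- `m_k = q^k (1+q) [k+1]` for the `R` family. -/
noncomputable def mR (k : ℕ) : Polynomial ℤ := X ^ k * (1 + X) * qnat (k + 1)

/-- Generalized operator for the `Q` family. -/
noncomputable def AQ (k : ℕ) (G : Polynomial (Polynomial ℤ)) : Polynomial (Polynomial ℤ) :=
  (1 + C ((X : Polynomial ℤ) ^ (2 * k + 1)) * X ^ 2) * qD G + C (mQ k) * (X * G)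
/-- Generalized operator for the `R` family. -/
noncomputable def AR (k : ℕ) (G : Polynomial (Polynomial ℤ)) : Polynomial (Polynomial ℤ) :=
  (1 + C ((X : Polynomial ℤ) ^ (2 * k + 2)) * X ^ 2) * qD G + C (mR k) * (X * G)

lemma mQ_id (k : ℕ) : X ^ (2 * k + 1) * (1 + X) + X * mQ k = mQ (k + 1) := by
  have h1 : qnat (k + 1) = qnat k + X ^ k := qnat_succ k
  have h2 : qnat (k + 2) = qnat (k + 1) + X ^ (k + 1) := qnat_succ (k + 1)
  simp only [mQ, h2, h1]
  ring

lemma mR_id (k : ℕ) : X ^ (2 * k + 2) * (1 + X) + X * mR k = mR (k + 1) := by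
  have h2 : qnat (k + 2) = qnat (k + 1) + X ^ (k + 1) := qnat_succ (k + 1)
  simp only [mR, h2]
  ring

lemma commQ1 (k : ℕ) (G : Polynomial (Polynomial ℤ)) :
    qD (AQ k G) = AQ (k + 1) (qD G) + C (mQ k) * G := by
  have h : AQ k G = qD G + C ((X : Polynomial ℤ) ^ (2 * k + 1)) * (X ^ 2 * qD G)
      + C (mQ k) * (X * G) := by rw [AQ]; ring
  rw [h, qD_add, qD_add, qD_C_mul, qD_C_mul, qD_X2_mul, qD_X_mul, AQ,
    ← mQ_id k]
  simp only [C_mul, C_add, C_pow, C_1]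
  ring

lemma commR1 (k : ℕ) (G : Polynomial (Polynomial ℤ)) :
    qD (AR k G) = AR (k + 1) (qD G) + C (mR k) * G := by
  have h : AR k G = qD G + C ((X : Polynomial ℤ) ^ (2 * k + 2)) * (X ^ 2 * qD G)
      + C (mR k) * (X * G) := by rw [AR]; ring
  rw [h, qD_add, qD_add, qD_C_mul, qD_C_mul, qD_X2_mul, qD_X_mul, AR,
    ← mR_id k]
  simp only [C_mul, C_add, C_pow, C_1]
  ring

lemma qD_iter_add (n : ℕ) (p r : Polynomial (Polynomial ℤ)) :
    qD^[n] (p + r) = qD^[n] p + qD^[n] r := by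
  induction n generalizing p r with
  | zero => rfl
  | succ m ih => rw [Function.iterate_succ_apply, qD_add, ih, Function.iterate_succ_apply,
      Function.iterate_succ_apply]

lemma qD_iter_C_mul (n : ℕ) (a : Polynomial ℤ) (p : Polynomial (Polynomial ℤ)) :
    qD^[n] (C a * p) = C a * qD^[n] p := by
  induction n generalizing p with
  | zero => rfl
  | succ m ih => rw [Function.iterate_succ_apply, qD_C_mul, ih, Function.iterate_succ_apply]

lemma commQH (h k : ℕ) (G : Polynomial (Polynomial ℤ)) :
    qD^[h + 1] (AQ k G) = AQ (k + h + 1) (qD^[h + 1] G)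
      + C (∑ j ∈ Finset.range (h + 1), mQ (k + j)) * qD^[h] G := by
  induction h generalizing k G with
  | zero => simpa using commQ1 k G
  | succ m ih =>
    rw [Function.iterate_succ_apply, commQ1, qD_iter_add, qD_iter_C_mul,
      ih (k + 1) (qD G), ← Function.iterate_succ_apply qD (m + 1) G]
    have hs : ∑ j ∈ Finset.range (m + 1 + 1), mQ (k + j)
        = (∑ j ∈ Finset.range (m + 1), mQ (k + 1 + j)) + mQ k := by
      rw [Finset.sum_range_succ']
      congr 1
      exact Finset.sum_congr rfl fun j _ => by rw [show k + (j + 1) = k + 1 + j by omega]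
    rw [hs, ← Function.iterate_succ_apply qD m G]
    have hk : k + 1 + m + 1 = k + (m + 1) + 1 := by omega
    rw [hk]
    simp only [C_add, Nat.succ_eq_add_one]
    ring

lemma commRH (h k : ℕ) (G : Polynomial (Polynomial ℤ)) :
    qD^[h + 1] (AR k G) = AR (k + h + 1) (qD^[h + 1] G)
      + C (∑ j ∈ Finset.range (h + 1), mR (k + j)) * qD^[h] G := by
  induction h generalizing k G with
  | zero => simpa using commR1 k G
  | succ m ih =>
    rw [Function.iterate_succ_apply, commR1, qD_iter_add, qD_iter_C_mul,
      ih (k + 1) (qD G), ← Function.iterate_succ_apply qD (m + 1) G]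
    have hs : ∑ j ∈ Finset.range (m + 1 + 1), mR (k + j)
        = (∑ j ∈ Finset.range (m + 1), mR (k + 1 + j)) + mR k := by
      rw [Finset.sum_range_succ']
      congr 1
      exact Finset.sum_congr rfl fun j _ => by rw [show k + (j + 1) = k + 1 + j by omega]
    rw [hs, ← Function.iterate_succ_apply qD m G]
    have hk : k + 1 + m + 1 = k + (m + 1) + 1 := by omega
    rw [hk]
    simp only [C_add, Nat.succ_eq_add_one]
    ring

lemma gamQ (h : ℕ) : ∑ j ∈ Finset.range h, mQ j = qnat h ^ 2 := by
  induction h with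
  | zero => simp [qnat_zero]
  | succ m ih =>
    rw [Finset.sum_range_succ, ih, mQ, qnat_succ m]
    ring

lemma gamR (h : ℕ) : ∑ j ∈ Finset.range h, mR j = qnat h * qnat (h + 1) := by
  induction h with
  | zero => simp [qnat_zero]
  | succ m ih =>
    rw [Finset.sum_range_succ, ih, mR, qnat_succ (m + 1), qnat_succ m]
    ring

noncomputable def motz (b lam : ℕ → Polynomial (Polynomial ℤ)) (n h : ℕ) :
    Polynomial (Polynomial ℤ) :=
  ∑ f : Fin n → MStep,
    if isMotzkinFrom (List.ofFn f) h then mweight b lam (List.ofFn f) h else 0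

lemma sum_mstep {M : Type*} [AddCommMonoid M] (g : MStep → M) :
    ∑ s : MStep, g s = g .up + g .level + g .down := by
  have : (Finset.univ : Finset MStep) = {MStep.up, MStep.level, MStep.down} := by decide
  rw [this]
  rw [Finset.sum_insert (by decide), Finset.sum_insert (by decide), Finset.sum_singleton,
    add_assoc]

lemma motz_zero (b lam : ℕ → Polynomial (Polynomial ℤ)) (h : ℕ) :
    motz b lam 0 h = if h = 0 then 1 else 0 := by
  rw [motz]
  rw [Finset.sum_eq_single (fun i : Fin 0 => i.elim0)]
  · simp [isMotzkinFrom, mweight, List.ofFn_zero]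
  · intro f _ hf; exact absurd (_root_.funext fun i => Fin.elim0 i) hf
  · intro hf; exact absurd (Finset.mem_univ _) hf

lemma motz_succ (b lam : ℕ → Polynomial (Polynomial ℤ)) (n h : ℕ) :
    motz b lam (n + 1) h = motz b lam n (h + 1) + b h * motz b lam n h
      + (if h = 0 then 0 else lam h * motz b lam n (h - 1)) := by
  rw [motz]
  rw [← Equiv.sum_comp (Fin.consEquiv (fun _ : Fin (n + 1) => MStep))]
  rw [Fintype.sum_prod_type]
  have hofn : ∀ (s : MStep) (g : Fin n → MStep),
      List.ofFn (Fin.consEquiv (fun _ : Fin (n + 1) => MStep) (s, g)) = s :: List.ofFn g := by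
    intro s g
    rw [List.ofFn_succ]
    simp [Fin.consEquiv]
  rw [sum_mstep]
  congr 1
  congr 1
  · -- up
    rw [motz]
    exact Finset.sum_congr rfl fun g _ => by rw [hofn]; rfl
  · -- level
    rw [motz, Finset.mul_sum]
    refine Finset.sum_congr rfl fun g _ => ?_
    rw [hofn]
    show (if isMotzkinFrom (List.ofFn g) h then b h * mweight b lam (List.ofFn g) h else 0) = _
    rw [mul_ite, mul_zero]
  · -- down
    rw [motz]
    rcases Nat.eq_zero_or_pos h with rfl | hp
    · rw [if_pos rfl]
      refine Finset.sum_eq_zero fun g _ => ?_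
      rw [hofn]; simp [isMotzkinFrom]
    · rw [if_neg (by omega), Finset.mul_sum]
      refine Finset.sum_congr rfl fun g _ => ?_
      rw [hofn]
      have hne : (h != 0) = true := by
        simpa using Nat.pos_iff_ne_zero.mp hp
      simp only [isMotzkinFrom, mweight, hne, Bool.true_and, mul_ite, mul_zero]

noncomputable def bQf (h : ℕ) : Polynomial (Polynomial ℤ) :=
  X * C ((X : Polynomial ℤ) ^ h * (qnat h + qnat (h + 1)))
noncomputable def lQf (h : ℕ) : Polynomial (Polynomial ℤ) :=
  (1 + X ^ 2 * C ((X : Polynomial ℤ) ^ (2 * h - 1))) * C (qnat h) ^ 2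
noncomputable def bRf (h : ℕ) : Polynomial (Polynomial ℤ) :=
  X * C ((X : Polynomial ℤ) ^ h * (1 + X) * qnat (h + 1))
noncomputable def lRf (h : ℕ) : Polynomial (Polynomial ℤ) :=
  (1 + X ^ 2 * C ((X : Polynomial ℤ) ^ (2 * h))) * C (qnat h * qnat (h + 1))

noncomputable def PQ (h : ℕ) : Polynomial (Polynomial ℤ) :=
  ∏ i ∈ Finset.range h, (1 + X ^ 2 * C ((X : Polynomial ℤ) ^ (2 * i + 1)))
noncomputable def PR (h : ℕ) : Polynomial (Polynomial ℤ) :=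
  ∏ i ∈ Finset.range h, (1 + X ^ 2 * C ((X : Polynomial ℤ) ^ (2 * i + 2)))

lemma PQ_succ (h : ℕ) :
    PQ (h + 1) = PQ h * (1 + X ^ 2 * C ((X : Polynomial ℤ) ^ (2 * h + 1))) :=
  Finset.prod_range_succ _ _
lemma PR_succ (h : ℕ) :
    PR (h + 1) = PR h * (1 + X ^ 2 * C ((X : Polynomial ℤ) ^ (2 * h + 2))) :=
  Finset.prod_range_succ _ _

lemma qPolyQ_succ (n : ℕ) : qPolyQ (n + 1) = AQ 0 (qPolyQ n) := by
  rw [qPolyQ, AQ, mQ]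
  simp [qnat_zero, qnat_one]

lemma qPolyR_succ (n : ℕ) : qPolyR (n + 1) = AR 0 (qPolyR n) := by
  rw [qPolyR, AR, mR]
  simp [qnat_one, mul_comm, mul_assoc, mul_left_comm]

lemma mainQ (n : ℕ) : ∀ h, motz bQf lQf n h = PQ h * qD^[h] (qPolyQ n) := by
  induction n with
  | zero =>
    intro h
    rw [motz_zero]
    cases h with
    | zero => simp [PQ, qPolyQ]
    | succ m =>
      rw [if_neg (by omega), show qPolyQ 0 = 1 from rfl,
        Function.iterate_succ_apply, qD_one, Function.iterate_fixed qD_zero m, mul_zero]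
  | succ n ih =>
    intro h
    rw [motz_succ, ih, ih, qPolyQ_succ]
    cases h with
    | zero =>
      rw [if_pos rfl, add_zero, AQ, mQ]
      simp only [PQ, Finset.prod_range_one, Finset.prod_range_zero, Function.iterate_one,
        Function.iterate_zero, id_eq, bQf, qnat_zero, qnat_one, pow_zero, mul_one, one_mul,
        zero_add, Nat.mul_zero, pow_one, map_one, zero_mul]
      ring
    | succ m =>
      rw [if_neg (by omega), ih, Nat.add_sub_cancel, commQH m 0 (qPolyQ n)]
      simp only [Nat.zero_add]
      rw [gamQ (m + 1), AQ, ← Function.iterate_succ_apply' qD (m + 1) (qPolyQ n),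
        PQ_succ (m + 1), PQ_succ m]
      simp only [bQf, lQf, mQ, show 2 * (m + 1) - 1 = 2 * m + 1 from by omega]
      simp only [C_mul, C_add, C_pow, C_1, map_pow]
      ring

lemma mainR (n : ℕ) : ∀ h, motz bRf lRf n h = PR h * qD^[h] (qPolyR n) := by
  induction n with
  | zero =>
    intro h
    rw [motz_zero]
    cases h with
    | zero => simp [PR, qPolyR]
    | succ m =>
      rw [if_neg (by omega), show qPolyR 0 = 1 from rfl,
        Function.iterate_succ_apply, qD_one, Function.iterate_fixed qD_zero m, mul_zero]
  | succ n ih =>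
    intro h
    rw [motz_succ, ih, ih, qPolyR_succ]
    cases h with
    | zero =>
      rw [if_pos rfl, add_zero, AR, mR]
      simp only [PR, Finset.prod_range_one, Finset.prod_range_zero, Function.iterate_one,
        Function.iterate_zero, id_eq, bRf, qnat_zero, qnat_one, pow_zero, mul_one, one_mul,
        zero_add, Nat.mul_zero, pow_one, map_one, zero_mul, C_mul, C_add, C_1]
      ring
    | succ m =>
      rw [if_neg (by omega), ih, Nat.add_sub_cancel, commRH m 0 (qPolyR n)]
      simp only [Nat.zero_add]
      rw [gamR (m + 1), AR, ← Function.iterate_succ_apply' qD (m + 1) (qPolyR n),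
        PR_succ (m + 1), PR_succ m]
      simp only [bRf, lRf, mR]
      simp only [C_mul, C_add, C_pow, C_1, map_pow]
      ring

theorem stmt9' (n : ℕ) :
    (qPolyQ n = motz bQf lQf n 0) ∧ (qPolyR n = motz bRf lRf n 0) := by
  constructor
  · rw [mainQ n 0]; simp [PQ]
  · rw [mainR n 0]; simp [PR]

theorem stmt9 (n : ℕ) :
    (qPolyQ n = ∑ f : Fin n → MStep,
      if isMotzkinFrom (List.ofFn f) 0 then
        mweight
          (fun h => X * C ((X : Polynomial ℤ) ^ h * (qnat h + qnat (h + 1))))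
          (fun h => (1 + X ^ 2 * C ((X : Polynomial ℤ) ^ (2 * h - 1))) * C (qnat h) ^ 2)
          (List.ofFn f) 0
      else 0) ∧
    (qPolyR n = ∑ f : Fin n → MStep,
      if isMotzkinFrom (List.ofFn f) 0 then
        mweight
          (fun h => X * C ((X : Polynomial ℤ) ^ h * (1 + X) * qnat (h + 1)))
          (fun h => (1 + X ^ 2 * C ((X : Polynomial ℤ) ^ (2 * h))) * C (qnat h * qnat (h + 1)))
          (List.ofFn f) 0
      else 0) := by
  exact stmt9' n
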